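/- Let A and B be bounded linear operators on a complex Hilbert space H and let r ≥ 1 be a real number. Then w(B*A)^{2r} ≤ (1/2) w( |A|^{2r} + i|B|^{2r} )². -/

import Mathlib

open ContinuousLinearMap Complex

variable {H : Type*} [NormedAddCommGroup H] [InnerProductSpace ℂ H] [CompleteSpace H]

noncomputable def nrad (A : H →L[ℂ] H) : ℝ :=
  ⨆ x : {x : H // ‖x‖ = 1}, ‖(inner ℂ (A x) (x : H) : ℂ)‖

noncomputable def reP (A : H →L[ℂ] H) : H →L[ℂ] H := (2 : ℂ)⁻¹ • (A + adjoint A)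
noncomputable def imP (A : H →L[ℂ] H) : H →L[ℂ] H := (2 * Complex.I)⁻¹ • (A - adjoint A)

noncomputable def oabs (A : H →L[ℂ] H) : H →L[ℂ] H := cfc Real.sqrt (adjoint A * A)

noncomputable def opow (T : H →L[ℂ] H) (r : ℝ) : H →L[ℂ] H := cfc (fun t : ℝ => t ^ r) T

/-- Tangent line inequality for convex `u ↦ u ^ r`. -/
lemma tangent_line {u s r : ℝ} (hu : 0 ≤ u) (hs : 0 ≤ s) (hr : 1 ≤ r) :
    s ^ r + r * s ^ (r - 1) * (u - s) ≤ u ^ r := by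
  rcases hs.eq_or_lt with h | hs'
  · subst h
    rcases hr.eq_or_lt with h1 | h1
    · rw [← h1]
      simp [Real.rpow_one]
    · rw [Real.zero_rpow (by linarith : r ≠ 0), Real.zero_rpow (by linarith : r - 1 ≠ 0)]
      simpa using Real.rpow_nonneg hu r
  · have hv : -1 ≤ u / s - 1 := by
      have : 0 ≤ u / s := div_nonneg hu hs'.le
      linarith
    have hb := one_add_mul_self_le_rpow_one_add hv hr
    have h1 : (1 : ℝ) + (u / s - 1) = u / s := by ring
    rw [h1] at hb
    have hdiv : (u / s) ^ r = u ^ r / s ^ r := Real.div_rpow hu hs'.le r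
    rw [hdiv] at hb
    have hsr : 0 < s ^ r := Real.rpow_pos_of_pos hs' r
    have hs1 : s ^ (r - 1) = s ^ r / s := Real.rpow_sub_one hs'.ne' r
    have hmul := mul_le_mul_of_nonneg_left hb hsr.le
    calc s ^ r + r * s ^ (r - 1) * (u - s)
        = s ^ r * (1 + r * (u / s - 1)) := by
          rw [hs1]; field_simp
      _ ≤ s ^ r * (u ^ r / s ^ r) := hmul
      _ = u ^ r := by field_simp
    
lemma contOn_rpow {c : ℝ} (hc : 0 ≤ c) (S : Set ℝ) : ContinuousOn (fun t : ℝ => t ^ c) S :=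
  fun x _ => (Real.continuousAt_rpow_const x c (Or.inr hc)).continuousWithinAt

lemma inner_re_mono {S T : H →L[ℂ] H} (h : S ≤ T) (x : H) :
    (inner ℂ (S x) x : ℂ).re ≤ (inner ℂ (T x) x : ℂ).re := by
  have h0 := ((ContinuousLinearMap.le_def S T).mp h).inner_nonneg_left x
  simp only [reApplyInnerSelf, sub_apply, inner_sub_left, map_sub, RCLike.re_to_complex,
    Complex.sub_re] at h0
  have h1 := (Complex.nonneg_iff.mp h0).1
  simp only [Complex.sub_re] at h1
  linarith

lemma norm_inner_le_nrad (Z : H →L[ℂ] H) (x : {x : H // ‖x‖ = 1}) :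
    ‖(inner ℂ (Z x) (x : H) : ℂ)‖ ≤ nrad Z := by
  apply le_ciSup (f := fun y : {y : H // ‖y‖ = 1} => ‖(inner ℂ (Z y) (y : H) : ℂ)‖)
  refine ⟨‖Z‖, ?_⟩
  rintro y ⟨z, rfl⟩
  calc ‖(inner ℂ (Z z) (z : H) : ℂ)‖ ≤ ‖Z (z : H)‖ * ‖(z : H)‖ := norm_inner_le_norm _ _
    _ ≤ (‖Z‖ * ‖(z : H)‖) * ‖(z : H)‖ := by
        have := Z.le_opNorm (z : H)
        nlinarith [norm_nonneg (z : H)]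
    _ = ‖Z‖ := by rw [z.2]; ring

lemma nrad_nonneg (Z : H →L[ℂ] H) : 0 ≤ nrad Z :=
  Real.iSup_nonneg fun _ => norm_nonneg _

lemma oabs_mul_self (A : H →L[ℂ] H) : oabs A * oabs A = adjoint A * A := by
  have h0 : (0 : H →L[ℂ] H) ≤ adjoint A * A := by
    rw [← star_eq_adjoint]; exact star_mul_self_nonneg A
  have hsa : IsSelfAdjoint (adjoint A * A) := .of_nonneg h0
  unfold oabs
  rw [← cfc_mul _ _ (adjoint A * A) (by fun_prop) (by fun_prop)]
  have h : (spectrum ℝ (adjoint A * A)).EqOn (fun t => Real.sqrt t * Real.sqrt t) id :=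
    fun t ht => Real.mul_self_sqrt (spectrum_nonneg_of_nonneg h0 ht)
  rw [cfc_congr h, cfc_id ℝ _]

lemma mccarthy (T : H →L[ℂ] H) (hT : 0 ≤ T) {r : ℝ} (hr : 1 ≤ r) {x : H} (hx : ‖x‖ = 1) :
    ((inner ℂ ((T * T) x) x : ℂ)).re ^ r ≤ ((inner ℂ (opow T (2 * r) x) x : ℂ)).re := by
  have hsa : IsSelfAdjoint T := .of_nonneg hT
  set s : ℝ := ((inner ℂ ((T * T) x) x : ℂ)).re with hs_def
  have hTT : (0 : H →L[ℂ] H) ≤ T * T := by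
    have h := star_mul_self_nonneg T
    rwa [hsa.star_eq] at h
  have hs0 : 0 ≤ s := by
    have h := ((nonneg_iff_isPositive _).mp hTT).inner_nonneg_left x
    exact (Complex.nonneg_iff.mp h).1
  set c : ℝ := s ^ r - r * s ^ (r - 1) * s with hc_def
  set d : ℝ := r * s ^ (r - 1) with hd_def
  have hle : cfc (fun t : ℝ => c + d * t ^ 2) T ≤ opow T (2 * r) := by
    unfold opow
    apply cfc_mono ?_ (by fun_prop) (contOn_rpow (by linarith) _)
    intro t ht
    have ht0 : 0 ≤ t := spectrum_nonneg_of_nonneg hT ht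
    have h2 : t ^ (2 * r) = (t ^ 2) ^ r := by
      rw [← Real.rpow_natCast t 2, ← Real.rpow_mul ht0]
      norm_num
    rw [h2]
    have htan := tangent_line (u := t ^ 2) (by positivity) hs0 hr
    calc c + d * t ^ 2 = s ^ r + r * s ^ (r - 1) * (t ^ 2 - s) := by rw [hc_def, hd_def]; ring
      _ ≤ (t ^ 2) ^ r := htan
  have heq : cfc (fun t : ℝ => c + d * t ^ 2) T = algebraMap ℝ _ c + d • T ^ 2 := by
    rw [cfc_add T (fun _ => c) (fun t => d * t ^ 2) (by fun_prop) (by fun_prop),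
      cfc_const c T, cfc_const_mul d (fun t : ℝ => t ^ 2) T (by fun_prop), cfc_pow_id T 2]
  have hmono := inner_re_mono hle x
  rw [heq] at hmono
  have hxx : (inner ℂ (x : H) (x : H) : ℂ) = 1 := by
    rw [inner_self_eq_norm_sq_to_K, hx]; norm_num
  have hcalc : ((inner ℂ ((algebraMap ℝ (H →L[ℂ] H) c + d • T ^ 2) x) x : ℂ)).re = c + d * s := by
    rw [Algebra.algebraMap_eq_smul_one, ContinuousLinearMap.add_apply, ContinuousLinearMap.smul_apply, ContinuousLinearMap.smul_apply, ContinuousLinearMap.one_apply,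
      inner_add_left, ← Complex.coe_smul, ← Complex.coe_smul, inner_smul_left, inner_smul_left,
      hxx, pow_two]
    have hre : (inner ℂ (T (T x)) x : ℂ).re = s := by
      rw [hs_def, ContinuousLinearMap.mul_apply]
    simp [Complex.add_re, Complex.mul_re, hre]
  rw [hcalc] at hmono
  have hfin : c + d * s = s ^ r := by rw [hc_def, hd_def]; ring
  linarith

theorem stmt11 (A B : H →L[ℂ] H) (r : ℝ) (hr : 1 ≤ r) :
    (nrad (adjoint B * A)) ^ (2 * r)
      ≤ (1/2) * (nrad (opow (oabs A) (2 * r) + Complex.I • opow (oabs B) (2 * r))) ^ 2 := by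
  have h2r : (0 : ℝ) < 2 * r := by linarith
  set P := opow (oabs A) (2 * r) with hP_def
  set Q := opow (oabs B) (2 * r) with hQ_def
  set Z := P + Complex.I • Q with hZ_def
  have hoabsA : (0 : H →L[ℂ] H) ≤ oabs A := cfc_nonneg fun t _ => Real.sqrt_nonneg t
  have hoabsB : (0 : H →L[ℂ] H) ≤ oabs B := cfc_nonneg fun t _ => Real.sqrt_nonneg t
  have hP : (0 : H →L[ℂ] H) ≤ P :=
    cfc_nonneg fun t ht => Real.rpow_nonneg (spectrum_nonneg_of_nonneg hoabsA ht) _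
  have hQ : (0 : H →L[ℂ] H) ≤ Q :=
    cfc_nonneg fun t ht => Real.rpow_nonneg (spectrum_nonneg_of_nonneg hoabsB ht) _
  have key : ∀ x : {x : H // ‖x‖ = 1},
      ‖(inner ℂ ((adjoint B * A) x) (x : H) : ℂ)‖ ^ (2 * r) ≤ (1/2) * nrad Z ^ 2 := by
    rintro ⟨x, hx⟩
    set a : ℝ := ((inner ℂ (P x) x : ℂ)).re with ha_def
    set b : ℝ := ((inner ℂ (Q x) x : ℂ)).re with hb_def
    have hPpos := (nonneg_iff_isPositive P).mp hP
    have hQpos := (nonneg_iff_isPositive Q).mp hQ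
    have ha0 : 0 ≤ a := by
      have h := hPpos.inner_nonneg_left x
      exact (Complex.nonneg_iff.mp h).1
    have hb0 : 0 ≤ b := by
      have h := hQpos.inner_nonneg_left x
      exact (Complex.nonneg_iff.mp h).1
    have hza : (inner ℂ (P x) (x : H) : ℂ) = (a : ℂ) := by
      have h := ((isPositive_iff_complex P).mp hPpos x).1
      simpa [RCLike.re_to_complex, ha_def] using h.symm ▸ rfl
    have hzb : (inner ℂ (Q x) (x : H) : ℂ) = (b : ℂ) := by
      have h := ((isPositive_iff_complex Q).mp hQpos x).1
      simpa [RCLike.re_to_complex, hb_def] using h.symm ▸ rfl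
    have hz : (inner ℂ (Z x) (x : H) : ℂ) = (a : ℂ) - Complex.I * b := by
      rw [hZ_def, add_apply, smul_apply, inner_add_left, inner_smul_left, hza, hzb]
      simp [Complex.conj_I]
      ring
    have hnorm : ‖(inner ℂ (Z x) (x : H) : ℂ)‖ ^ 2 = a ^ 2 + b ^ 2 := by
      rw [hz]
      rw [Complex.sq_norm, Complex.normSq_apply]
      simp
      ring
    have h1 : ‖(inner ℂ ((adjoint B * A) x) (x : H) : ℂ)‖ ≤ ‖A x‖ * ‖B x‖ := by
      rw [ContinuousLinearMap.mul_apply, adjoint_inner_left]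
      exact norm_inner_le_norm _ _
    have hAx : ‖A x‖ ^ (2 * r) ≤ a := by
      have hmc := mccarthy (oabs A) hoabsA hr hx
      have hre : ((inner ℂ ((oabs A * oabs A) x) x : ℂ)).re = ‖A x‖ ^ 2 := by
        rw [oabs_mul_self, ContinuousLinearMap.mul_apply, adjoint_inner_left,
          inner_self_eq_norm_sq_to_K]
        simp [← Complex.ofReal_pow]
      rw [hre] at hmc
      calc ‖A x‖ ^ (2 * r) = (‖A x‖ ^ 2) ^ r := by
            rw [← Real.rpow_natCast (‖A x‖) 2, ← Real.rpow_mul (norm_nonneg _)]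
            norm_num
        _ ≤ a := hmc
    have hBx : ‖B x‖ ^ (2 * r) ≤ b := by
      have hmc := mccarthy (oabs B) hoabsB hr hx
      have hre : ((inner ℂ ((oabs B * oabs B) x) x : ℂ)).re = ‖B x‖ ^ 2 := by
        rw [oabs_mul_self, ContinuousLinearMap.mul_apply, adjoint_inner_left,
          inner_self_eq_norm_sq_to_K]
        simp [← Complex.ofReal_pow]
      rw [hre] at hmc
      calc ‖B x‖ ^ (2 * r) = (‖B x‖ ^ 2) ^ r := by
            rw [← Real.rpow_natCast (‖B x‖) 2, ← Real.rpow_mul (norm_nonneg _)]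
            norm_num
        _ ≤ b := hmc
    have hnr := norm_inner_le_nrad Z ⟨x, hx⟩
    calc ‖(inner ℂ ((adjoint B * A) x) (x : H) : ℂ)‖ ^ (2 * r)
        ≤ (‖A x‖ * ‖B x‖) ^ (2 * r) :=
          Real.rpow_le_rpow (norm_nonneg _) h1 h2r.le
      _ = ‖A x‖ ^ (2 * r) * ‖B x‖ ^ (2 * r) := Real.mul_rpow (norm_nonneg _) (norm_nonneg _)
      _ ≤ a * b := by
          have h0A : 0 ≤ ‖A x‖ ^ (2 * r) := Real.rpow_nonneg (norm_nonneg _) _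
          have h0B : 0 ≤ ‖B x‖ ^ (2 * r) := Real.rpow_nonneg (norm_nonneg _) _
          exact mul_le_mul hAx hBx h0B ha0
      _ ≤ (a ^ 2 + b ^ 2) / 2 := by nlinarith [sq_nonneg (a - b)]
      _ = (1/2) * ‖(inner ℂ (Z x) (x : H) : ℂ)‖ ^ 2 := by rw [hnorm]; ring
      _ ≤ (1/2) * nrad Z ^ 2 := by
          have hsq := pow_le_pow_left₀ (norm_nonneg _) hnr 2
          linarith
  rcases isEmpty_or_nonempty {x : H // ‖x‖ = 1} with hE | hNE
  · have hz : nrad (adjoint B * A) = 0 := by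
      unfold nrad; exact Real.iSup_of_isEmpty _
    rw [hz, Real.zero_rpow h2r.ne']
    positivity
  · set M := (1/2) * nrad Z ^ 2 with hM_def
    have hM0 : 0 ≤ M := by positivity
    have hb : nrad (adjoint B * A) ≤ M ^ (1 / (2 * r)) := by
      apply ciSup_le
      intro x
      have hk := key x
      have hterm0 : 0 ≤ ‖(inner ℂ ((adjoint B * A) x) (x : H) : ℂ)‖ := norm_nonneg _
      calc ‖(inner ℂ ((adjoint B * A) x) (x : H) : ℂ)‖
          = (‖(inner ℂ ((adjoint B * A) x) (x : H) : ℂ)‖ ^ (2 * r)) ^ (1 / (2 * r)) := by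
            rw [← Real.rpow_mul hterm0, mul_one_div, div_self h2r.ne', Real.rpow_one]
        _ ≤ M ^ (1 / (2 * r)) :=
            Real.rpow_le_rpow (Real.rpow_nonneg hterm0 _) hk (by positivity)
    have h0 : 0 ≤ nrad (adjoint B * A) := nrad_nonneg _
    calc nrad (adjoint B * A) ^ (2 * r)
        ≤ (M ^ (1 / (2 * r))) ^ (2 * r) := Real.rpow_le_rpow h0 hb h2r.le
      _ = M := by
          rw [← Real.rpow_mul hM0, one_div, inv_mul_cancel₀ h2r.ne', Real.rpow_one]
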